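/- Let b be a collection of marginal tables with deg b = 2. If n and n′ are two distinct tables in the fiber F_b, then their supports are disjoint: {i ∈ I : n(i) > 0} ∩ {i ∈ I : n′(i) > 0} = ∅. -/
import Mathlib


open Finset

variable {m : ℕ}

/-- The set of cells of an `m`-way contingency table with `I δ` levels for variable `δ`. -/
abbrev Cell (I : Fin m → ℕ) := ∀ δ : Fin m, Fin (I δ)

/-- Marginal cells for a subset `D` of the variables. -/
abbrev PCell (I : Fin m → ℕ) (D : Finset (Fin m)) := ∀ δ : {x // x ∈ D}, Fin (I δ.1)

/-- Restriction of a cell to the variables in `D`. -/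
def restrictC (I : Fin m → ℕ) (D : Finset (Fin m)) (i : Cell I) : PCell I D :=
  fun δ => i δ.1

/-- The `D`-marginal of a contingency table `n`. -/
def margin (I : Fin m → ℕ) (n : Cell I → ℕ) (D : Finset (Fin m)) (f : PCell I D) : ℕ :=
  ∑ i : Cell I, if restrictC I D i = f then n i else 0

/-- The fiber of `b = A n₀`, i.e. all tables sharing all `D`-marginals, `D ∈ 𝒟`, with `n₀`. -/
def fiber (I : Fin m → ℕ) (𝒟 : Finset (Finset (Fin m))) (n₀ : Cell I → ℕ) :
    Set (Cell I → ℕ) :=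
  {n | ∀ D ∈ 𝒟, ∀ f : PCell I D, margin I n D f = margin I n₀ D f}


lemma sum_eq_two_struct {α : Type*} [Fintype α] [DecidableEq α] (n : α → ℕ)
    (h : ∑ l, n l = 2) (i : α) (hi : 0 < n i) :
    ∃ j, n = fun l => (if l = i then 1 else 0) + (if l = j then 1 else 0) := by
  have hsplit : n i + ∑ l ∈ Finset.univ.erase i, n l = 2 := by
    rw [Finset.add_sum_erase _ n (Finset.mem_univ i)]; exact h
  have hni2 : n i ≤ 2 := by omega
  rcases Nat.lt_or_ge (n i) 2 with h1 | h2
  · have hni : n i = 1 := by omega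
    have hrest : ∑ l ∈ Finset.univ.erase i, n l = 1 := by omega
    obtain ⟨j, hj, hjne⟩ := Finset.exists_ne_zero_of_sum_ne_zero (by rw [hrest]; omega)
    have hnj1 : n j ≤ 1 := hrest ▸ Finset.single_le_sum (fun _ _ => Nat.zero_le _) hj
    have hnj : n j = 1 := by omega
    have hzero : ∑ l ∈ (Finset.univ.erase i).erase j, n l = 0 := by
      have := Finset.add_sum_erase _ n hj
      omega
    rw [Finset.sum_eq_zero_iff] at hzero
    have hji : j ≠ i := (Finset.mem_erase.mp hj).1
    refine ⟨j, funext fun l => ?_⟩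
    by_cases hli : l = i
    · subst hli; simp [hji.symm, hni]
    · by_cases hlj : l = j
      · subst hlj; simp [hli, hnj]
      · simp only [if_neg hli, if_neg hlj]
        exact hzero l (by simp [hli, hlj])
  · have hni : n i = 2 := by omega
    have hzero : ∑ l ∈ Finset.univ.erase i, n l = 0 := by omega
    rw [Finset.sum_eq_zero_iff] at hzero
    refine ⟨i, funext fun l => ?_⟩
    by_cases hli : l = i
    · subst hli; simp [hni]
    · simp only [if_neg hli]
      exact hzero l (by simp [hli])

/-- Sample size (total frequency) of a table. -/
def total (I : Fin m → ℕ) (n : Cell I → ℕ) : ℕ := ∑ i : Cell I, n i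


lemma margin_pair (I : Fin m → ℕ) (D : Finset (Fin m)) (i j : Cell I) (f : PCell I D) :
    margin I (fun l => (if l = i then 1 else 0) + (if l = j then 1 else 0)) D f
      = (if restrictC I D i = f then 1 else 0) + (if restrictC I D j = f then 1 else 0) := by
  unfold margin
  rw [Finset.sum_congr rfl (fun l _ => by
    show (if restrictC I D l = f then _ else 0) =
      (if l = i then (if restrictC I D i = f then 1 else 0) else 0)
      + (if l = j then (if restrictC I D j = f then 1 else 0) else 0)
    by_cases hli : l = i <;> by_cases hlj : l = j <;> subst_vars <;> simp_all <;> split <;> simp)]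
  rw [Finset.sum_add_distrib, Finset.sum_ite_eq' _ i, Finset.sum_ite_eq' _ j]
  simp

/-- two distinct tables of a degree two fiber have disjoint supports. -/
theorem statement0 (I : Fin m → ℕ) (hI : ∀ δ, 2 ≤ I δ)
    (𝒟 : Finset (Finset (Fin m))) (hcov : ∀ δ : Fin m, ∃ D ∈ 𝒟, δ ∈ D)
    (n₀ : Cell I → ℕ)
    (hdeg : ∀ n ∈ fiber I 𝒟 n₀, total I n = 2)
    (n n' : Cell I → ℕ) (hn : n ∈ fiber I 𝒟 n₀) (hn' : n' ∈ fiber I 𝒟 n₀)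
    (hne : n ≠ n') :
    {i : Cell I | 0 < n i} ∩ {i : Cell I | 0 < n' i} = ∅ := by
  ext i
  simp only [Set.mem_inter_iff, Set.mem_setOf_eq, Set.mem_empty_iff_false, iff_false, not_and]
  intro hni hn'i
  exfalso
  apply hne
  have ht : total I n = 2 := hdeg n hn
  have ht' : total I n' = 2 := hdeg n' hn'
  obtain ⟨j, hj⟩ := sum_eq_two_struct n ht i hni
  obtain ⟨k, hk⟩ := sum_eq_two_struct n' ht' i hn'i
  by_cases hjk : j = k
  · subst hjk; rw [hj, hk]
  · exfalso
    have hex : ∃ δ, j δ ≠ k δ := by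
      by_contra h; push_neg at h; exact hjk (funext h)
    obtain ⟨δ, hδ⟩ := hex
    obtain ⟨D, hD, hδD⟩ := hcov δ
    have hm : margin I n D (restrictC I D j) = margin I n' D (restrictC I D j) := by
      rw [hn D hD, hn' D hD]
    rw [hj, hk, margin_pair, margin_pair] at hm
    have hrk : restrictC I D k ≠ restrictC I D j :=
      fun h => hδ (congrFun h ⟨δ, hδD⟩).symm
    simp only [if_pos rfl, if_neg hrk] at hm
    by_cases hij : restrictC I D i = restrictC I D j <;> simp [hij] at hm
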